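/- Let k be a field of characteristic 0, let n ≥ 1, and let α_{ij} ∈ k for 1 ≤ i, j ≤ n satisfy α_{ii} = 1 for all i and α_{ij}α_{ji} = 1 for all i, j. Let S be the quotient of the free k-algebra on x₁, …, x_n by the two-sided ideal generated by the elements x_ix_j − α_{ij}x_jx_i for all 1 ≤ i, j ≤ n (the graded skew polynomial algebra). Then the image in S of the element f = x₁² + x₂² + ⋯ + x_n² is central in S if and only if α_{ij}² = 1 for all 1 ≤ i, j ≤ n, i.e., if and only if every α_{ij} equals 1 or −1. -/

import Mathlib

open FreeAlgebra

/-- The quotient of the free `k`-algebra on `Fin m` by the two-sided ideal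
generated by the set `rels` of relators, realized as the `RingQuot` of the
relation identifying each relator with `0`. -/
abbrev presentedAlgebra (k : Type) [Field k] (m : ℕ)
    (rels : Set (FreeAlgebra k (Fin m))) : Type :=
  RingQuot (fun a b : FreeAlgebra k (Fin m) => a ∈ rels ∧ b = 0)

/-- The defining relation of the skew polynomial algebra with parameters `α`. -/
abbrev skewRels (k : Type) [Field k] (n : ℕ) (α : Fin n → Fin n → k) :
    Set (FreeAlgebra k (Fin n)) :=
  {r | ∃ i j : Fin n, r = ι k i * ι k j - α i j • (ι k j * ι k i)}

theorem stmt_10 (k : Type) [Field k] [CharZero k] (n : ℕ) (hn : 1 ≤ n)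
    (α : Fin n → Fin n → k) (h1 : ∀ i, α i i = 1) (h2 : ∀ i j, α i j * α j i = 1) :
    (∀ y : presentedAlgebra k n (skewRels k n α),
        RingQuot.mkAlgHom k _ (∑ i : Fin n, ι k i * ι k i) * y
          = y * RingQuot.mkAlgHom k _ (∑ i : Fin n, ι k i * ι k i))
      ↔ ∀ i j : Fin n, α i j ^ 2 = 1 := by
  set rel : FreeAlgebra k (Fin n) → FreeAlgebra k (Fin n) → Prop :=
    fun a b => a ∈ skewRels k n α ∧ b = 0 with hrel
  set mk : FreeAlgebra k (Fin n) →ₐ[k] presentedAlgebra k n (skewRels k n α) :=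
    RingQuot.mkAlgHom k rel with hmk
  constructor
  · -- forward direction: centrality forces α i j ^ 2 = 1
    intro hc i j
    by_cases hij : i = j
    · subst hij; rw [h1, one_pow]
    set q : k := α i j with hq
    -- a representation on the "quantum plane" module
    set W : Type := (ℕ × ℕ) →₀ k with hW
    set U : Module.End k W :=
      Finsupp.lift W k (ℕ × ℕ) (fun p => Finsupp.single (p.1 + 1, p.2) (q ^ p.2)) with hU
    set V : Module.End k W :=
      Finsupp.lift W k (ℕ × ℕ) (fun p => Finsupp.single (p.1, p.2 + 1) 1) with hV
    have Usingle : ∀ (a b : ℕ) (c : k),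
        U (Finsupp.single (a, b) c) = Finsupp.single (a + 1, b) (c * q ^ b) := by
      intro a b c
      rw [hU, Finsupp.lift_apply, Finsupp.sum_single_index (by simp)]
      rw [Finsupp.smul_single']
    have Vsingle : ∀ (a b : ℕ) (c : k),
        V (Finsupp.single (a, b) c) = Finsupp.single (a, b + 1) c := by
      intro a b c
      rw [hV, Finsupp.lift_apply, Finsupp.sum_single_index (by simp)]
      rw [Finsupp.smul_single', mul_one]
    have key : U * V = q • (V * U) := by
      apply Finsupp.lhom_ext
      rintro ⟨a, b⟩ c
      rw [Module.End.mul_apply, LinearMap.smul_apply, Module.End.mul_apply,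
        Vsingle, Usingle, Usingle, Vsingle, Finsupp.smul_single, smul_eq_mul]
      congr 1
      ring
    have hq0 : q ≠ 0 := by
      intro h
      have := h2 i j
      rw [← hq, h, zero_mul] at this
      exact zero_ne_one this
    -- generators of the representation
    set X : Fin n → Module.End k W := fun l => if l = i then U else if l = j then V else 0
      with hX
    have hXi : X i = U := by rw [hX]; simp
    have hXj : X j = V := by rw [hX]; simp [Ne.symm hij]
    have hX0 : ∀ l : Fin n, l ≠ i → l ≠ j → X l = 0 := by
      intro l h h'; rw [hX]; simp [h, h']
    have keyX : ∀ l m : Fin n, X l * X m = α l m • (X m * X l) := by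
      intro l m
      by_cases hli : l = i
      · by_cases hmi : m = i
        · rw [hli, hmi, hXi, h1, one_smul]
        · by_cases hmj : m = j
          · rw [hli, hmj, hXi, hXj]
            simpa [hq] using key
          · rw [hX0 m hmi hmj]; simp
      · by_cases hlj : l = j
        · by_cases hmi : m = i
          · rw [hlj, hmi, hXj, hXi, key, smul_smul, hq, h2 j i, one_smul]
          · by_cases hmj : m = j
            · rw [hlj, hmj, hXj, h1, one_smul]
            · rw [hX0 m hmi hmj]; simp
        · rw [hX0 l hli hlj]; simp
    set φ0 : FreeAlgebra k (Fin n) →ₐ[k] Module.End k W := FreeAlgebra.lift k X with hφ0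
    have w : ∀ ⦃x y : FreeAlgebra k (Fin n)⦄, rel x y → φ0 x = φ0 y := by
      rintro x y ⟨⟨l, m, rfl⟩, rfl⟩
      simp only [map_sub, map_smul, map_mul, map_zero, hφ0, FreeAlgebra.lift_ι_apply]
      rw [keyX l m]
      simp
    set φ := RingQuot.liftAlgHom k (⟨φ0, w⟩ :
      { f : FreeAlgebra k (Fin n) →ₐ[k] Module.End k W // ∀ ⦃x y⦄, rel x y → f x = f y })
      with hφ
    have E0 := congrArg φ (hc (mk (ι k j)))
    rw [map_mul, map_mul, hmk, hφ] at E0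
    simp only [RingQuot.liftAlgHom_mkAlgHom_apply] at E0
    simp only [map_sum, map_mul, hφ0, FreeAlgebra.lift_ι_apply] at E0
    have hsum : (∑ l : Fin n, X l * X l) = U * U + V * V := by
      have hterm : ∀ l : Fin n,
          X l * X l = (if l = i then U * U else 0) + (if l = j then V * V else 0) := by
        intro l
        by_cases hl : l = i
        · rw [hl, hXi, if_pos rfl, if_neg hij]; simp
        · by_cases hlj : l = j
          · rw [hlj, hXj, if_neg (Ne.symm hij : j ≠ i), if_pos rfl]; simp
          · rw [hX0 l hl hlj, if_neg hl, if_neg hlj]; simp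
      rw [Finset.sum_congr rfl (fun l _ => hterm l), Finset.sum_add_distrib,
        Finset.sum_ite_eq' Finset.univ i, Finset.sum_ite_eq' Finset.univ j]
      simp
    rw [hXj, hsum] at E0
    have E2 := congrArg (fun T : Module.End k W =>
      (T (Finsupp.single ((0 : ℕ), (0 : ℕ)) (1 : k))) (2, 1)) E0
    simp only [Module.End.mul_apply, LinearMap.add_apply, map_add, Usingle, Vsingle,
      Finsupp.add_apply] at E2
    norm_num only at E2
    rw [Finsupp.add_apply, Finsupp.add_apply, Finsupp.single_eq_same, Finsupp.single_eq_same,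
      Finsupp.single_eq_of_ne (show ((2:ℕ), (1:ℕ)) ≠ (0, 3) by norm_num)] at E2
    rw [sq]
    simpa using E2
  · -- backward direction: α i j ^ 2 = 1 implies centrality
    intro hα y
    have comm : ∀ i j : Fin n,
        mk (ι k i) * mk (ι k j) = α i j • (mk (ι k j) * mk (ι k i)) := by
      intro i j
      have hr : rel (ι k i * ι k j - α i j • (ι k j * ι k i)) 0 := ⟨⟨i, j, rfl⟩, rfl⟩
      have := RingQuot.mkAlgHom_rel k hr
      rw [map_sub, map_zero, sub_eq_zero, map_smul, map_mul, map_mul] at this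
      exact this
    set F := mk (∑ i : Fin n, ι k i * ι k i) with hF
    have gen : ∀ j : Fin n, F * mk (ι k j) = mk (ι k j) * F := by
      intro j
      rw [hF, map_sum, Finset.sum_mul, Finset.mul_sum]
      refine Finset.sum_congr rfl fun i _ => ?_
      rw [map_mul]
      calc mk (ι k i) * mk (ι k i) * mk (ι k j)
          = mk (ι k i) * (mk (ι k i) * mk (ι k j)) := by rw [mul_assoc]
        _ = mk (ι k i) * (α i j • (mk (ι k j) * mk (ι k i))) := by rw [comm i j]
        _ = α i j • (mk (ι k i) * mk (ι k j) * mk (ι k i)) := by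
            rw [mul_smul_comm, ← mul_assoc]
        _ = α i j • ((α i j • (mk (ι k j) * mk (ι k i))) * mk (ι k i)) := by rw [comm i j]
        _ = (α i j ^ 2) • (mk (ι k j) * (mk (ι k i) * mk (ι k i))) := by
            rw [smul_mul_assoc, smul_smul, mul_assoc, ← sq]
        _ = mk (ι k j) * (mk (ι k i) * mk (ι k i)) := by rw [hα i j, one_smul]
    obtain ⟨a, rfl⟩ := RingQuot.mkAlgHom_surjective k rel y
    show F * mk a = mk a * F
    induction a using FreeAlgebra.induction with
    | grade0 r => rw [AlgHom.commutes]; exact (Algebra.commutes r F).symm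
    | grade1 x => exact gen x
    | mul a b ha hb => rw [map_mul, ← mul_assoc, ha, mul_assoc, hb, mul_assoc]
    | add a b ha hb => rw [map_add, mul_add, add_mul, ha, hb]
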